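/- arXiv:hep-th/9801168 — 2 statements merged into one kernel-verified Lean document; each statement's English description precedes it below -/
import Mathlib

section
/- The double series ∑_{n=0}^∞ ∑_{k=1}^∞ 1 / (k (n+k)(n+2k)) equals (5/4)ζ(3). -/
open scoped BigOperators

noncomputable def H (n : ℕ) : ℝ := ∑ j ∈ Finset.range n, (1:ℝ)/(j+1)

noncomputable def zeta3 : ℝ := ∑' n : ℕ, (1:ℝ)/((n:ℝ)+1)^3

/-! ### Auxiliary lemmas -/

lemma H_succ (n : ℕ) : H (n+1) = H n + 1/((n:ℝ)+1) := by
  simp [H, Finset.sum_range_succ]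

lemma H_one : H 1 = 1 := by simp [H]

lemma H_add (B m : ℕ) : H (B + m) = H B + ∑ i ∈ Finset.range m, (1:ℝ)/((B:ℝ)+(i:ℝ)+1) := by
  rw [H, Finset.sum_range_add, ← H]
  congr 1
  exact Finset.sum_congr rfl fun i _ => by push_cast; ring_nf

lemma H_tail_tendsto (m : ℕ) :
    Filter.Tendsto (fun B => H (B + m) - H B) Filter.atTop (nhds 0) := by
  have hle : ∀ B : ℕ, H (B + m) - H B ≤ (m:ℝ) * (1/((B:ℝ)+1)) := by
    intro B
    rw [H_add]
    have : ∑ i ∈ Finset.range m, (1:ℝ)/((B:ℝ)+(i:ℝ)+1) ≤ ∑ _i ∈ Finset.range m, (1:ℝ)/((B:ℝ)+1) := by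
      apply Finset.sum_le_sum
      intro i _
      apply one_div_le_one_div_of_le (by positivity)
      have : (0:ℝ) ≤ (i:ℝ) := Nat.cast_nonneg i
      linarith
    simpa using this
  have hge : ∀ B : ℕ, (0:ℝ) ≤ H (B + m) - H B := by
    intro B
    rw [H_add]
    have : (0:ℝ) ≤ ∑ i ∈ Finset.range m, (1:ℝ)/((B:ℝ)+(i:ℝ)+1) := by positivity
    linarith
  have hlim : Filter.Tendsto (fun B : ℕ => (m:ℝ) * (1/((B:ℝ)+1))) Filter.atTop (nhds 0) := by
    have := tendsto_one_div_add_atTop_nhds_zero_nat (𝕜 := ℝ)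
    simpa using this.const_mul (m:ℝ)
  exact squeeze_zero hge hle hlim

lemma telescope_hasSum (m : ℕ) :
    HasSum (fun b : ℕ => (1:ℝ)/((b:ℝ)+1) - 1/((b:ℝ)+(m:ℝ)+1)) (H m) := by
  have hnn : ∀ b : ℕ, (0:ℝ) ≤ (1:ℝ)/((b:ℝ)+1) - 1/((b:ℝ)+(m:ℝ)+1) := by
    intro b
    have h1 : (0:ℝ) < (b:ℝ)+1 := by positivity
    have : (1:ℝ)/((b:ℝ)+(m:ℝ)+1) ≤ 1/((b:ℝ)+1) := by
      apply one_div_le_one_div_of_le h1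
      have : (0:ℝ) ≤ (m:ℝ) := Nat.cast_nonneg m
      linarith
    linarith
  rw [hasSum_iff_tendsto_nat_of_nonneg hnn]
  have hpartial : ∀ B : ℕ, ∑ b ∈ Finset.range B, ((1:ℝ)/((b:ℝ)+1) - 1/((b:ℝ)+(m:ℝ)+1))
      = H m - (H (B + m) - H B) := by
    intro B
    rw [Finset.sum_sub_distrib]
    have h1 : ∑ b ∈ Finset.range B, (1:ℝ)/((b:ℝ)+1) = H B := rfl
    have h2 : ∑ b ∈ Finset.range B, (1:ℝ)/((b:ℝ)+(m:ℝ)+1) = H (m + B) - H m := by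
      rw [H_add m B]
      have he : ∑ i ∈ Finset.range B, (1:ℝ)/((m:ℝ)+(i:ℝ)+1)
          = ∑ b ∈ Finset.range B, (1:ℝ)/((b:ℝ)+(m:ℝ)+1) :=
        Finset.sum_congr rfl (fun i _ => by ring_nf)
      rw [he]; ring
    rw [h1, h2, Nat.add_comm B m]; ring
  simp_rw [hpartial]
  have h2 : Filter.Tendsto (fun B => H m - (H (B + m) - H B)) Filter.atTop (nhds (H m - 0)) :=
    Filter.Tendsto.const_sub _ (H_tail_tendsto m)
  simpa using h2

noncomputable def F : ℕ × ℕ → ℝ :=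
  fun p => 1/(((p.1:ℝ)+1)*((p.2:ℝ)+1)*((p.1:ℝ)+(p.2:ℝ)+2))

noncomputable def U : ℕ × ℕ → ℝ :=
  fun p => 1/(((p.1:ℝ)+1)*((p.1:ℝ)+(p.2:ℝ)+2)^2)

lemma F_nonneg (p : ℕ × ℕ) : 0 ≤ F p := by unfold F; positivity

lemma g_summable : Summable (fun n : ℕ => ((n:ℝ)+1)^(-(3/2) : ℝ)) := by
  have := (Real.summable_one_div_nat_rpow (p := 3/2)).2 (by norm_num)
  have h2 := (summable_nat_add_iff (f := fun n : ℕ => 1 / (n:ℝ)^((3:ℝ)/2)) 1).2 this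
  refine h2.congr fun n => ?_
  push_cast
  rw [Real.rpow_neg (by positivity), one_div]

lemma F_summable : Summable F := by
  have hg := g_summable
  have hprod := hg.mul_of_nonneg hg (fun n => by positivity) (fun n => by positivity)
  refine (hprod.of_nonneg_of_le (fun p => F_nonneg p) ?_)
  rintro ⟨a, b⟩
  have key : 2 * Real.sqrt (((a:ℝ)+1)*((b:ℝ)+1)) ≤ (a:ℝ)+(b:ℝ)+2 := by
    nlinarith [Real.sq_sqrt (by positivity : (0:ℝ) ≤ ((a:ℝ)+1)*((b:ℝ)+1)),
      Real.sqrt_nonneg (((a:ℝ)+1)*((b:ℝ)+1)),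
      sq_nonneg (Real.sqrt (((a:ℝ)+1)*((b:ℝ)+1)) - 1), sq_nonneg ((a:ℝ) - (b:ℝ))]
  show F (a, b) ≤ _
  unfold F
  simp only
  set x : ℝ := ((a:ℝ)+1)*((b:ℝ)+1) with hx
  have hxpos : (0:ℝ) < x := by positivity
  have hrhs : ((a:ℝ)+1)^(-(3/2):ℝ) * ((b:ℝ)+1)^(-(3/2):ℝ) = x^(-(3/2):ℝ) := by
    rw [hx, Real.mul_rpow (by positivity) (by positivity)]
  rw [hrhs, Real.rpow_neg hxpos.le, ← one_div]
  have hx32 : x^((3/2):ℝ) = x * Real.sqrt x := by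
    have h := Real.rpow_add hxpos 1 (1/2)
    rw [Real.rpow_one] at h
    rw [Real.sqrt_eq_rpow, ← h]
    norm_num
  rw [hx32]
  apply one_div_le_one_div_of_le (by positivity)
  have h1 : Real.sqrt x ≤ (a:ℝ)+(b:ℝ)+2 := by nlinarith [Real.sqrt_nonneg x]
  nlinarith [Real.sqrt_nonneg x, hxpos]

lemma U_le_F (p : ℕ × ℕ) : U p ≤ F p := by
  obtain ⟨a, b⟩ := p
  unfold U F
  simp only
  rw [div_le_div_iff₀ (by positivity) (by positivity)]
  nlinarith [mul_nonneg (mul_nonneg (by positivity : (0:ℝ) ≤ (a:ℝ)+1)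
    (by positivity : (0:ℝ) ≤ (a:ℝ)+(b:ℝ)+2)) (by positivity : (0:ℝ) ≤ (a:ℝ)+1)]

lemma U_summable : Summable U :=
  F_summable.of_nonneg_of_le (fun p => by unfold U; positivity) U_le_F

lemma F_eq_U_add (p : ℕ × ℕ) : F p = U p + U p.swap := by
  obtain ⟨a, b⟩ := p
  unfold U F
  simp only [Prod.swap_prod_mk]
  field_simp
  ring

lemma F_swap (p : ℕ × ℕ) : F p.swap = F p := by
  obtain ⟨a, b⟩ := p
  unfold F
  simp only [Prod.swap_prod_mk]
  ring_nf

lemma row_hasSum (a : ℕ) :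
    HasSum (fun b => F (a, b)) (H (a+1) / ((a:ℝ)+1)^2) := by
  have h := (telescope_hasSum (a+1)).mul_left (1/((a:ℝ)+1)^2)
  have heq : (fun b : ℕ => 1/((a:ℝ)+1)^2 * ((1:ℝ)/((b:ℝ)+1) - 1/((b:ℝ)+((a+1:ℕ):ℝ)+1)))
      = fun b => F (a, b) := by
    funext b
    unfold F
    simp only
    push_cast
    have hb : ((b:ℝ)+1) ≠ 0 := by positivity
    have hab : ((b:ℝ)+(a:ℝ)+2) ≠ 0 := by positivity
    have ha : ((a:ℝ)+1) ≠ 0 := by positivity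
    field_simp
    ring
  rw [heq] at h
  have hd : H (a+1) / ((a:ℝ)+1)^2 = 1/((a:ℝ)+1)^2 * H (a+1) := by ring
  rw [hd]
  exact h

lemma A_summable : Summable (fun a : ℕ => H (a+1) / ((a:ℝ)+1)^2) := by
  have := F_summable.prod
  refine this.congr fun a => ?_
  exact (row_hasSum a).tsum_eq

lemma T_eq_A : ∑' p : ℕ × ℕ, F p = ∑' a : ℕ, H (a+1) / ((a:ℝ)+1)^2 := by
  rw [Summable.tsum_prod F_summable]
  exact tsum_congr fun a => (row_hasSum a).tsum_eq

/-! ### Equivalences -/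

def eLE : ℕ × ℕ ≃ {p : ℕ × ℕ // p.1 ≤ p.2} where
  toFun p := ⟨(p.2, p.2 + p.1), Nat.le_add_right _ _⟩
  invFun q := (q.1.2 - q.1.1, q.1.1)
  left_inv p := by simp
  right_inv q := by
    obtain ⟨⟨a, b⟩, h⟩ := q
    have h' : a ≤ b := h
    apply Subtype.ext
    show (a, a + (b - a)) = (a, b)
    rw [Nat.add_sub_cancel' h']

def eLT : ℕ × ℕ ≃ {p : ℕ × ℕ // p.1 < p.2} where
  toFun p := ⟨(p.2, p.2 + p.1 + 1), by omega⟩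
  invFun q := (q.1.2 - q.1.1 - 1, q.1.1)
  left_inv p := by
    obtain ⟨n, k⟩ := p
    show (k + n + 1 - k - 1, k) = (n, k)
    have h1 : k + n + 1 - k - 1 = n := by omega
    rw [h1]
  right_inv q := by
    obtain ⟨⟨a, b⟩, h⟩ := q
    have h' : a < b := h
    apply Subtype.ext
    show (a, a + (b - a - 1) + 1) = (a, b)
    have h1 : a + (b - a - 1) + 1 = b := by omega
    rw [h1]

def eSig : (Σ s : ℕ, Fin (s+1)) ≃ {p : ℕ × ℕ // p.1 ≤ p.2} where
  toFun x := ⟨((x.2 : ℕ), x.1), Nat.lt_succ_iff.mp x.2.2⟩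
  invFun q := ⟨q.1.2, ⟨q.1.1, Nat.lt_succ_of_le q.2⟩⟩
  left_inv x := rfl
  right_inv q := rfl

def eGT : {p : ℕ × ℕ // p.1 < p.2} ≃ ↑({p : ℕ × ℕ | p.1 ≤ p.2}ᶜ) where
  toFun q := ⟨q.1.swap, by
    obtain ⟨⟨a, b⟩, h⟩ := q
    simp only [Set.mem_compl_iff, Set.mem_setOf_eq, Prod.swap_prod_mk]
    omega⟩
  invFun q := ⟨q.1.swap, by
    obtain ⟨⟨a, b⟩, h⟩ := q
    simp only [Set.mem_compl_iff, Set.mem_setOf_eq] at h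
    simp only [Prod.swap_prod_mk]
    omega⟩
  left_inv q := by simp
  right_inv q := by simp

/-! ### The U computation -/

lemma U_total : ∑' p : ℕ × ℕ, U p = ∑' s : ℕ, H (s+1) / ((s:ℝ)+2)^2 := by
  -- first: sum of U equals sum of w over the subtype p.1 ≤ p.2
  set w : ℕ × ℕ → ℝ := fun p => 1/(((p.1:ℝ)+1)*((p.2:ℝ)+2)^2) with hw
  have h1 : ∑' p : ℕ × ℕ, U p = ∑' q : {p : ℕ × ℕ // p.1 ≤ p.2}, w q := by
    rw [← eLE.tsum_eq (fun q : {p : ℕ × ℕ // p.1 ≤ p.2} => w q)]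
    rw [← (Equiv.prodComm ℕ ℕ).tsum_eq U]
    refine tsum_congr fun p => ?_
    obtain ⟨n, k⟩ := p
    simp only [hw, eLE, Equiv.prodComm, Equiv.coe_fn_mk, Prod.swap_prod_mk, U]
    push_cast
    ring_nf
  rw [h1]
  -- now reindex by the sigma type
  have hsummable : Summable (fun q : {p : ℕ × ℕ // p.1 ≤ p.2} => w q) := by
    rw [← eLE.summable_iff]
    have : Summable (fun p : ℕ × ℕ => U p.swap) :=
      (Equiv.prodComm ℕ ℕ).summable_iff.mpr U_summable
    refine this.congr fun p => ?_
    obtain ⟨n, k⟩ := p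
    simp only [hw, eLE, Equiv.coe_fn_mk, Prod.swap_prod_mk, U, Function.comp]
    push_cast
    ring_nf
  have h2 : ∑' q : {p : ℕ × ℕ // p.1 ≤ p.2}, w q
      = ∑' x : (Σ s : ℕ, Fin (s+1)), w (eSig x) := (eSig.tsum_eq _).symm
  have hs2 : Summable (fun x : (Σ s : ℕ, Fin (s+1)) => w (eSig x)) :=
    ((eSig.summable_iff (f := fun q : {p : ℕ × ℕ // p.1 ≤ p.2} => w q)).mpr hsummable).congr
      (fun x => rfl)
  rw [h2, Summable.tsum_sigma hs2]
  refine tsum_congr fun s => ?_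
  rw [tsum_fintype]
  have hterm : ∀ a : Fin (s+1), w ((eSig ⟨s, a⟩ : {p : ℕ × ℕ // p.1 ≤ p.2}) : ℕ × ℕ)
      = (1/(((a:ℕ):ℝ)+1)) * (1/((s:ℝ)+2)^2) := by
    intro a
    simp only [hw, eSig, Equiv.coe_fn_mk]
    push_cast
    field_simp
  rw [Finset.sum_congr rfl (fun a _ => hterm a), ← Finset.sum_mul,
    Fin.sum_univ_eq_sum_range (fun a => 1/((a:ℝ)+1)) (s+1), ← H, mul_one_div]

lemma zeta3_summable : Summable (fun n : ℕ => (1:ℝ)/((n:ℝ)+1)^3) := by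
  have h := Real.summable_one_div_nat_pow.2 (show 2 ≤ 3 by norm_num)
  have h2 := (summable_nat_add_iff (f := fun n : ℕ => 1 / (n:ℝ)^3) 1).2 h
  refine h2.congr fun n => ?_
  push_cast
  ring_nf

lemma T_eq_2U : ∑' p : ℕ × ℕ, F p = 2 * ∑' p : ℕ × ℕ, U p := by
  have hUs : Summable (fun p : ℕ × ℕ => U p.swap) :=
    (Equiv.prodComm ℕ ℕ).summable_iff.mpr U_summable
  calc ∑' p : ℕ × ℕ, F p = ∑' p : ℕ × ℕ, (U p + U p.swap) := tsum_congr F_eq_U_add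
    _ = ∑' p : ℕ × ℕ, U p + ∑' p : ℕ × ℕ, U p.swap := Summable.tsum_add U_summable hUs
    _ = 2 * ∑' p : ℕ × ℕ, U p := by
        have hswap : ∑' p : ℕ × ℕ, U p.swap = ∑' p : ℕ × ℕ, U p :=
          (Equiv.prodComm ℕ ℕ).tsum_eq U
        rw [hswap]
        ring

lemma A_val : ∑' a : ℕ, H (a+1) / ((a:ℝ)+1)^2 = 2 * zeta3 := by
  set A := ∑' a : ℕ, H (a+1) / ((a:ℝ)+1)^2 with hA
  have hA2sum : Summable (fun s : ℕ => H (s+2) / ((s:ℝ)+2)^2) := by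
    have := (summable_nat_add_iff (f := fun a : ℕ => H (a+1) / ((a:ℝ)+1)^2) 1).2 A_summable
    refine this.congr fun s => ?_
    rw [show s+1+1 = s+2 from rfl]
    push_cast
    ring_nf
  have hz2sum : Summable (fun s : ℕ => (1:ℝ)/((s:ℝ)+2)^3) := by
    have := (summable_nat_add_iff (f := fun n : ℕ => (1:ℝ)/((n:ℝ)+1)^3) 1).2 zeta3_summable
    refine this.congr fun s => ?_
    push_cast
    ring_nf
  have hA2 : ∑' s : ℕ, H (s+2) / ((s:ℝ)+2)^2 = A - 1 := by
    have h := Summable.tsum_eq_zero_add A_summable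
    rw [← hA] at h
    have hshift : ∑' s : ℕ, H (s+1+1) / (((s+1:ℕ):ℝ)+1)^2 = ∑' s : ℕ, H (s+2) / ((s:ℝ)+2)^2 :=
      tsum_congr fun s => by
        rw [show s+1+1 = s+2 from rfl]
        push_cast
        ring_nf
    rw [hshift] at h
    norm_num [H_one] at h
    linarith
  have hz2 : ∑' s : ℕ, (1:ℝ)/((s:ℝ)+2)^3 = zeta3 - 1 := by
    have h := Summable.tsum_eq_zero_add zeta3_summable
    rw [show (∑' n : ℕ, (1:ℝ)/((n:ℝ)+1)^3) = zeta3 from rfl] at h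
    have hshift : ∑' s : ℕ, (1:ℝ)/(((s+1:ℕ):ℝ)+1)^3 = ∑' s : ℕ, (1:ℝ)/((s:ℝ)+2)^3 :=
      tsum_congr fun s => by push_cast; ring_nf
    rw [hshift] at h
    norm_num at h
    simp only [one_div]
    linarith
  have hU : ∑' s : ℕ, H (s+1) / ((s:ℝ)+2)^2 = A - zeta3 := by
    have hcong : ∀ s : ℕ, H (s+1) / ((s:ℝ)+2)^2
        = H (s+2) / ((s:ℝ)+2)^2 - (1:ℝ)/((s:ℝ)+2)^3 := by
      intro s
      have := H_succ (s+1)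
      push_cast at this
      rw [this]
      have h2 : ((s:ℝ)+2) ≠ 0 := by positivity
      field_simp
      ring
    rw [tsum_congr hcong, Summable.tsum_sub hA2sum hz2sum, hA2, hz2]
    ring
  have hT : A = 2 * (A - zeta3) := by
    have h1 := T_eq_A
    have h2 := T_eq_2U
    rw [U_total, hU] at h2
    rw [← hA] at h1
    linarith
  linarith

lemma T_val : ∑' p : ℕ × ℕ, F p = 2 * zeta3 := by rw [T_eq_A, A_val]

lemma D_val : ∑' k : ℕ, F (k, k) = zeta3 / 2 := by
  have hcong : ∀ k : ℕ, F (k, k) = (1/2 : ℝ) * ((1:ℝ)/((k:ℝ)+1)^3) := by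
    intro k
    unfold F
    simp only
    have : ((k:ℝ)+1) ≠ 0 := by positivity
    field_simp
    ring
  rw [tsum_congr hcong, tsum_mul_left]
  rw [show (∑' n : ℕ, (1:ℝ)/((n:ℝ)+1)^3) = zeta3 from rfl]
  ring

lemma hsle : Summable (fun p : ℕ × ℕ => F (eLE p)) := by
  have : Summable (fun q : {p : ℕ × ℕ // p.1 ≤ p.2} => F q) :=
    F_summable.subtype {p : ℕ × ℕ | p.1 ≤ p.2}
  exact (eLE.summable_iff.mpr this).congr fun p => rfl

lemma hslt : Summable (fun p : ℕ × ℕ => F (eLT p)) := by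
  have : Summable (fun q : {p : ℕ × ℕ // p.1 < p.2} => F q) :=
    F_summable.subtype {p : ℕ × ℕ | p.1 < p.2}
  exact (eLT.summable_iff.mpr this).congr fun p => rfl

lemma LE_iterated : ∑' q : {p : ℕ × ℕ // p.1 ≤ p.2}, F q = ∑' n : ℕ, ∑' k : ℕ, F (k, k+n) := by
  rw [← eLE.tsum_eq (fun q : {p : ℕ × ℕ // p.1 ≤ p.2} => F q), Summable.tsum_prod hsle]
  rfl

lemma LT_iterated : ∑' q : {p : ℕ × ℕ // p.1 < p.2}, F q = ∑' n : ℕ, ∑' k : ℕ, F (k, k+n+1) := by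
  rw [← eLT.tsum_eq (fun q : {p : ℕ × ℕ // p.1 < p.2} => F q), Summable.tsum_prod hslt]
  rfl

lemma LE_split : ∑' q : {p : ℕ × ℕ // p.1 ≤ p.2}, F q
    = zeta3 / 2 + ∑' q : {p : ℕ × ℕ // p.1 < p.2}, F q := by
  rw [LE_iterated, LT_iterated]
  have houter : Summable (fun n : ℕ => ∑' k : ℕ, F (k, k+n)) := by
    have := hsle.prod
    exact this.congr fun n => rfl
  have h := Summable.tsum_eq_zero_add houter
  rw [h]
  congr 1
  · rw [← D_val]
    exact tsum_congr fun k => by rw [Nat.add_zero]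

lemma GT_eq_LT : ∑' x : ↑({p : ℕ × ℕ | p.1 ≤ p.2}ᶜ), F ↑x
    = ∑' q : {p : ℕ × ℕ // p.1 < p.2}, F q := by
  rw [← eGT.tsum_eq (fun x : ↑({p : ℕ × ℕ | p.1 ≤ p.2}ᶜ) => F ↑x)]
  exact tsum_congr fun q => F_swap q.val

lemma LE_val : ∑' q : {p : ℕ × ℕ // p.1 ≤ p.2}, F q = (5/4) * zeta3 := by
  have hsplit := Summable.tsum_subtype_add_tsum_subtype_compl F_summable {p : ℕ × ℕ | p.1 ≤ p.2}
  rw [GT_eq_LT, T_val] at hsplit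
  have hle := LE_split
  have : ∑' x : ↑{p : ℕ × ℕ | p.1 ≤ p.2}, F ↑x = ∑' q : {p : ℕ × ℕ // p.1 ≤ p.2}, F q := rfl
  rw [this] at hsplit
  linarith

theorem stmt13 : ∑' n : ℕ, ∑' k : ℕ,
    (1:ℝ) / (((k:ℝ)+1) * ((n:ℝ)+(k:ℝ)+1) * ((n:ℝ)+2*(k:ℝ)+2)) = (5/4) * zeta3 := by
  have hterm : ∀ n k : ℕ, (1:ℝ) / (((k:ℝ)+1) * ((n:ℝ)+(k:ℝ)+1) * ((n:ℝ)+2*(k:ℝ)+2))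
      = F (k, k+n) := by
    intro n k
    unfold F
    simp only
    push_cast
    ring_nf
  calc ∑' n : ℕ, ∑' k : ℕ, (1:ℝ) / (((k:ℝ)+1) * ((n:ℝ)+(k:ℝ)+1) * ((n:ℝ)+2*(k:ℝ)+2))
      = ∑' n : ℕ, ∑' k : ℕ, F (k, k+n) :=
        tsum_congr fun n => tsum_congr fun k => hterm n k
    _ = ∑' q : {p : ℕ × ℕ // p.1 ≤ p.2}, F q := LE_iterated.symm
    _ = (5/4) * zeta3 := LE_val
end

section
/- The double series ∑_{n=1}^∞ ∑_{k=1}^∞ (1/k!) · Γ(2k)Γ(n+k)/Γ(1+n+2k) equals (1/2)ζ(2) = π²/12. -/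
open scoped BigOperators
open Filter Real

noncomputable def f (n k : ℕ) : ℝ :=
  (1 / (Nat.factorial (k+1) : ℝ)) *
    ((Nat.factorial (2*k+1) : ℝ) * (Nat.factorial (n+k+1) : ℝ) / (Nat.factorial (n+2*k+3) : ℝ))

noncomputable def a (k n : ℕ) : ℝ :=
  (Nat.factorial (n+k+1) : ℝ) / (((k:ℝ)+1) * (Nat.factorial (n+2*k+2) : ℝ))

lemma a_diff (k n : ℕ) : a k n - a k (n+1) =
    (Nat.factorial (n+k+1) : ℝ) / (Nat.factorial (n+2*k+3) : ℝ) := by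
  unfold a
  have h1 : n+1+k+1 = n+k+2 := by ring
  have h2 : n+1+2*k+2 = n+2*k+3 := by ring
  rw [h1, h2]
  have e1 : ((Nat.factorial (n+2*k+3) : ℝ)) = ((n:ℝ)+2*k+3) * (Nat.factorial (n+2*k+2) : ℝ) := by
    rw [show n+2*k+3 = (n+2*k+2)+1 from rfl, Nat.factorial_succ (n+2*k+2)]
    push_cast; ring
  have e2 : ((Nat.factorial (n+k+2) : ℝ)) = ((n:ℝ)+k+2) * (Nat.factorial (n+k+1) : ℝ) := by
    rw [show n+k+2 = (n+k+1)+1 from rfl, Nat.factorial_succ (n+k+1)]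
    push_cast; ring
  rw [e1, e2]
  have c1 : ((Nat.factorial (n+k+1) : ℝ)) ≠ 0 := by positivity
  have c2 : ((Nat.factorial (n+2*k+2) : ℝ)) ≠ 0 := by positivity
  have c3 : ((k:ℝ)+1) ≠ 0 := by positivity
  have c4 : ((n:ℝ)+2*k+3) ≠ 0 := by positivity
  field_simp
  ring

lemma a_nonneg (k n : ℕ) : 0 ≤ a k n := by unfold a; positivity

lemma a_tendsto (k : ℕ) : Tendsto (a k) atTop (nhds 0) := by
  have hb : ∀ n, a k n ≤ 1/((n:ℝ)+1) := by
    intro n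
    have hle : Nat.factorial (n+k+1) * (n+1) ≤ Nat.factorial (n+2*k+2) := by
      calc Nat.factorial (n+k+1) * (n+1) ≤ Nat.factorial (n+k+1) * (n+k+2) :=
            Nat.mul_le_mul_left _ (by omega)
        _ = Nat.factorial (n+k+2) := by
            rw [show n+k+2 = (n+k+1)+1 from rfl, Nat.factorial_succ (n+k+1)]; ring
        _ ≤ Nat.factorial (n+2*k+2) := Nat.factorial_le (by omega)
    have hle' : (Nat.factorial (n+k+1) : ℝ) * ((n:ℝ)+1) ≤ (Nat.factorial (n+2*k+2) : ℝ) := by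
      exact_mod_cast hle
    unfold a
    rw [div_le_div_iff₀ (by positivity) (by positivity)]
    have : (Nat.factorial (n+k+1) : ℝ) * ((n:ℝ)+1) ≤ ((k:ℝ)+1) * ((Nat.factorial (n+2*k+2)) : ℝ) := by
      calc (Nat.factorial (n+k+1) : ℝ) * ((n:ℝ)+1) ≤ (Nat.factorial (n+2*k+2) : ℝ) := hle'
        _ ≤ ((k:ℝ)+1) * _ := le_mul_of_one_le_left (by positivity) (by nlinarith [k.cast_nonneg (α := ℝ)])
    linarith
  have h0 : Tendsto (fun n : ℕ => 1/((n:ℝ)+1)) atTop (nhds 0) :=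
    tendsto_one_div_add_atTop_nhds_zero_nat
  exact squeeze_zero (fun n => a_nonneg k n) hb h0

lemma tele (k : ℕ) : HasSum (fun n : ℕ => (Nat.factorial (n+k+1) : ℝ) / (Nat.factorial (n+2*k+3) : ℝ))
    ((Nat.factorial (k+1) : ℝ) / (((k:ℝ)+1) * (Nat.factorial (2*k+2) : ℝ))) := by
  have hnn : ∀ n : ℕ, (0:ℝ) ≤ (Nat.factorial (n+k+1) : ℝ) / (Nat.factorial (n+2*k+3) : ℝ) :=
    fun n => by positivity
  rw [hasSum_iff_tendsto_nat_of_nonneg hnn]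
  have hps : ∀ N : ℕ, ∑ n ∈ Finset.range N,
      (Nat.factorial (n+k+1) : ℝ) / (Nat.factorial (n+2*k+3) : ℝ) = a k 0 - a k N := by
    intro N
    rw [← Finset.sum_range_sub' (a k) N]
    exact Finset.sum_congr rfl fun n _ => (a_diff k n).symm
  simp only [hps]
  have h0 : a k 0 = (Nat.factorial (k+1) : ℝ) / (((k:ℝ)+1) * (Nat.factorial (2*k+2) : ℝ)) := by
    unfold a; norm_num
  rw [← h0]
  simpa using (a_tendsto k).const_sub (a k 0)

lemma colsum (k : ℕ) : HasSum (fun n : ℕ => f n k) (1 / (2*((k:ℝ)+1)^2)) := by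
  have h := (tele k).mul_left
    ((1 / (Nat.factorial (k+1) : ℝ)) * (Nat.factorial (2*k+1) : ℝ))
  have heq : ((1 / (Nat.factorial (k+1) : ℝ)) * (Nat.factorial (2*k+1) : ℝ)) *
      ((Nat.factorial (k+1) : ℝ) / (((k:ℝ)+1) * (Nat.factorial (2*k+2) : ℝ)))
      = 1 / (2*((k:ℝ)+1)^2) := by
    have e : ((Nat.factorial (2*k+2) : ℝ)) = (2*(k:ℝ)+2) * (Nat.factorial (2*k+1) : ℝ) := by
      rw [show 2*k+2 = (2*k+1)+1 from rfl, Nat.factorial_succ (2*k+1)]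
      push_cast; ring
    rw [e]
    have c1 : ((Nat.factorial (k+1) : ℝ)) ≠ 0 := by positivity
    have c2 : ((Nat.factorial (2*k+1) : ℝ)) ≠ 0 := by positivity
    have c3 : ((k:ℝ)+1) ≠ 0 := by positivity
    field_simp
  rw [heq] at h
  convert h using 2 with n
  · rfl
  unfold f
  ring

lemma rowsum : HasSum (fun k : ℕ => 1 / (2*((k:ℝ)+1)^2)) (Real.pi^2 / 12) := by
  have h := (hasSum_nat_add_iff' 1).mpr hasSum_zeta_two
  simp only [Finset.range_one, Finset.sum_singleton] at h
  norm_num at h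
  have h2 := h.div_const 2
  have e : Real.pi^2/6/2 = Real.pi^2/12 := by ring
  rw [e] at h2
  convert h2 using 1
  · rfl
  funext k
  field_simp

lemma key : ∑' n : ℕ, ∑' k : ℕ, f n k = Real.pi^2 / 12 := by
  have hF : Summable (fun p : ℕ × ℕ => f p.2 p.1) := by
    rw [summable_prod_of_nonneg (fun p => by unfold f; positivity)]
    exact ⟨fun k => (colsum k).summable,
      by simpa only [(fun k => (colsum k).tsum_eq)] using rowsum.summable⟩
  have hG : Summable (fun p : ℕ × ℕ => f p.1 p.2) := by
    have := hF.prod_symm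
    simpa using this
  have h1 : ∑' p : ℕ × ℕ, f p.1 p.2 = ∑' n : ℕ, ∑' k : ℕ, f n k :=
    Summable.tsum_prod' hG (fun n => hG.prod_factor n)
  have h2 : ∑' p : ℕ × ℕ, f p.1 p.2 = ∑' p : ℕ × ℕ, f p.2 p.1 :=
    ((Equiv.prodComm ℕ ℕ).tsum_eq fun p : ℕ × ℕ => f p.2 p.1)
  have h3 : ∑' p : ℕ × ℕ, f p.2 p.1 = ∑' k : ℕ, ∑' n : ℕ, f n k :=
    Summable.tsum_prod' hF (fun k => hF.prod_factor k)
  rw [← h1, h2, h3, tsum_congr (fun k => (colsum k).tsum_eq)]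
  exact rowsum.tsum_eq

theorem stmt14 : ∑' n : ℕ, ∑' k : ℕ,
    (1 / (Nat.factorial (k+1) : ℝ)) *
    ((Nat.factorial (2*k+1) : ℝ) * (Nat.factorial (n+k+1) : ℝ) / (Nat.factorial (n+2*k+3) : ℝ))
    = Real.pi^2 / 12 := key
end
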